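/- arXiv:2505.22174 — 2 statements merged into one kernel-verified Lean document; each statement's English description precedes it below -/
import Mathlib

section
/- For every integer n ≥ 1 and all α, β : Fin n → ℝ≥0 with β i ≤ α i for every i, there exists a deterministic online allocation algorithm F such that for every personalized 2-value stream v with parameters α, β and every time step T: every agent i with α i = β i > 0 (a 'type 2' agent) satisfies v_i(A_i^T) ≥ μ_i^n(T)/2, and every agent i with α i > β i = 0 (a 'type 3' agent) satisfies v_i(A_i^T) ≥ μ_i^n(T)/3. -/
open Finset

noncomputable section


/-- The agent to whom good `t` is assigned by the deterministic online algorithm `F`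
on stream `v`: `σ(t) = F [v 0, …, v t]`. -/
def alloc (n : ℕ) (F : List (Fin n → NNReal) → Fin n) (v : ℕ → Fin n → NNReal) (t : ℕ) : Fin n :=
  F ((List.range (t + 1)).map v)

/-- The bundle of agent `i` at the end of time step `T`. -/
def bundle (n : ℕ) (F : List (Fin n → NNReal) → Fin n) (v : ℕ → Fin n → NNReal)
    (i : Fin n) (T : ℕ) : Finset ℕ :=
  (Finset.range T).filter fun t => alloc n F v t = i

/-- The (real) value of the bundle `B` for agent `i`. -/
def bval (n : ℕ) (v : ℕ → Fin n → NNReal) (i : Fin n) (B : Finset ℕ) : ℝ :=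
  ∑ t ∈ B, (v t i : ℝ)

/-- The `n`-agent maximin share of the additive valuation `w` over the finite set `S` of goods. -/
def mmsN (n : ℕ) (S : Finset ℕ) (w : ℕ → ℝ) : ℝ :=
  sSup { x : ℝ | ∃ P : ℕ → Fin n,
    x = ⨅ j : Fin n, ∑ t ∈ S.filter (fun t => P t = j), w t }

section Aux


variable (n : ℕ) (hn : 0 < n)

noncomputable def pick (c : Fin n → ℕ) (w : Fin n → NNReal) : Fin n :=
  if h : (Finset.univ.filter fun i => 0 < w i).Nonempty then
    (Finset.exists_min_image _ (fun i => c i) h).choose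
  else ⟨0, hn⟩

lemma pick_spec (c : Fin n → ℕ) {w : Fin n → NNReal} {i : Fin n} (hi : 0 < w i) :
    0 < w (pick n hn c w) ∧ ∀ j, 0 < w j → c (pick n hn c w) ≤ c j := by
  have hne : (Finset.univ.filter fun i => 0 < w i).Nonempty := ⟨i, by simp [hi]⟩
  have hspec := (Finset.exists_min_image (Finset.univ.filter fun i => 0 < w i)
    (fun i => c i) hne).choose_spec
  rw [pick, dif_pos hne]
  refine ⟨?_, fun j hj => hspec.2 j (by simp [hj])⟩
  have := hspec.1
  simpa using this

noncomputable def step (c : Fin n → ℕ) (w : Fin n → NNReal) : Fin n → ℕ :=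
  fun i => if pick n hn c w = i ∧ 0 < w i then c i + 1 else c i

noncomputable def cnts (L : List (Fin n → NNReal)) : Fin n → ℕ :=
  L.foldl (step n hn) (fun _ => 0)

noncomputable def myF (L : List (Fin n → NNReal)) : Fin n :=
  pick n hn (cnts n hn L.dropLast) (L.getLastD 0)

variable (v : ℕ → Fin n → NNReal)

noncomputable def CC (t : ℕ) : Fin n → ℕ := cnts n hn ((List.range t).map v)

noncomputable def sig (t : ℕ) : Fin n := pick n hn (CC n hn v t) (v t)

lemma CC_succ (t : ℕ) : CC n hn v (t + 1) = step n hn (CC n hn v t) (v t) := by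
  simp [CC, cnts, List.range_succ]

lemma alloc_myF (t : ℕ) : alloc n (myF n hn) v t = sig n hn v t := by
  simp [alloc, myF, sig, List.range_succ, CC]

lemma CC_le_succ (t : ℕ) (j : Fin n) : CC n hn v t j ≤ CC n hn v (t + 1) j := by
  rw [CC_succ]
  unfold step
  split <;> omega

lemma CC_mono (j : Fin n) : Monotone (fun t => CC n hn v t j) :=
  monotone_nat_of_le_succ (fun t => CC_le_succ n hn v t j)

lemma sig_spec {t : ℕ} {i : Fin n} (hi : 0 < v t i) :
    0 < v t (sig n hn v t) ∧ CC n hn v t (sig n hn v t) ≤ CC n hn v t i :=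
  ⟨(pick_spec n hn _ hi).1, (pick_spec n hn _ hi).2 i hi⟩

lemma CC_incr {t : ℕ} {i : Fin n} (hi : 0 < v t i) :
    CC n hn v (t + 1) (sig n hn v t) = CC n hn v t (sig n hn v t) + 1 := by
  rw [CC_succ]
  unfold step
  rw [if_pos ⟨rfl, (sig_spec n hn v hi).1⟩]

lemma CC_card (T : ℕ) (i : Fin n) :
    CC n hn v T i =
      ((Finset.range T).filter fun t => sig n hn v t = i ∧ 0 < v t i).card := by
  induction T with
  | zero => simp [CC, cnts]
  | succ T ih =>
    rw [Finset.range_add_one, Finset.filter_insert, CC_succ]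
    unfold step
    rw [show pick n hn (CC n hn v T) (v T) = sig n hn v T from rfl]
    by_cases h : sig n hn v T = i ∧ 0 < v T i
    · rw [if_pos h, if_pos h, Finset.card_insert_of_notMem (by simp)]
      omega
    · rw [if_neg h, if_neg h]
      exact ih


lemma fiber_key {t1 t2 : ℕ} {i j : Fin n}
    (h1 : 0 < v t1 i) (hs1 : sig n hn v t1 = j) (hlt : t1 < t2) :
    CC n hn v t1 j < CC n hn v t2 j := by
  have hinc : CC n hn v (t1 + 1) j = CC n hn v t1 j + 1 := by
    rw [← hs1]; exact CC_incr n hn v h1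
  have hm : CC n hn v (t1 + 1) j ≤ CC n hn v t2 j := CC_mono n hn v j hlt
  omega

lemma fiber_card (T : ℕ) (i j : Fin n) :
    (((Finset.range T).filter fun t => 0 < v t i ∧ sig n hn v t = j)).card ≤
      (if j = i then CC n hn v T i else CC n hn v T i + 1) := by
  set A := (Finset.range T).filter fun t => 0 < v t i ∧ sig n hn v t = j with hA
  set B := if j = i then CC n hn v T i else CC n hn v T i + 1 with hB
  have hmem : ∀ t ∈ A, t < T ∧ 0 < v t i ∧ sig n hn v t = j := by
    intro t ht
    rw [hA, Finset.mem_filter, Finset.mem_range] at ht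
    exact ⟨ht.1, ht.2.1, ht.2.2⟩
  have hmap : ∀ t ∈ A, CC n hn v t j ∈ Finset.range B := by
    intro t ht
    obtain ⟨htT, hvi, hsig⟩ := hmem t ht
    rw [Finset.mem_range, hB]
    have hji : CC n hn v t j ≤ CC n hn v t i := by
      have := (sig_spec n hn v hvi).2
      rwa [hsig] at this
    split
    · rename_i hji'
      subst hji'
      have := fiber_key n hn v hvi hsig (show t < T from htT)
      exact this
    · have : CC n hn v t i ≤ CC n hn v T i := CC_mono n hn v i htT.le
      omega
  have hinj : Set.InjOn (fun t => CC n hn v t j) A := by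
    intro t1 h1 t2 h2 heq
    have heq' : CC n hn v t1 j = CC n hn v t2 j := heq
    obtain ⟨_, hv1, hs1⟩ := hmem t1 h1
    obtain ⟨_, hv2, hs2⟩ := hmem t2 h2
    rcases lt_trichotomy t1 t2 with h | h | h
    · have := fiber_key n hn v hv1 hs1 h; omega
    · exact h
    · have := fiber_key n hn v hv2 hs2 h; omega
  have := Finset.card_le_card_of_injOn _ hmap hinj
  simpa using this

lemma count_lt (T : ℕ) (i : Fin n) :
    ((Finset.range T).filter fun t => 0 < v t i).card < n * (CC n hn v T i + 1) := by
  rw [Finset.card_eq_sum_card_fiberwise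
    (f := fun t => sig n hn v t) (t := Finset.univ) (fun t _ => Finset.mem_univ _)]
  have hlt : ∑ j : Fin n,
      (((Finset.range T).filter fun t => 0 < v t i).filter fun t => sig n hn v t = j).card <
      ∑ _j : Fin n, (CC n hn v T i + 1) := by
    apply Finset.sum_lt_sum
    · intro j _
      rw [Finset.filter_filter]
      have := fiber_card n hn v T i j
      split at this <;> omega
    · refine ⟨i, Finset.mem_univ i, ?_⟩
      rw [Finset.filter_filter]
      have := fiber_card n hn v T i i
      rw [if_pos rfl] at this
      omega
  simpa using hlt

lemma sum_two_val (c : NNReal) (i : Fin n) (H : ∀ t, v t i = 0 ∨ v t i = c) (s : Finset ℕ) :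
    ∑ t ∈ s, (v t i : ℝ) = (c : ℝ) * (s.filter fun t => 0 < v t i).card := by
  rw [← Finset.sum_filter_add_sum_filter_not s (fun t => 0 < v t i)]
  have h1 : ∀ t ∈ s.filter (fun t => 0 < v t i), (v t i : ℝ) = (c : ℝ) := by
    intro t ht
    rcases H t with h | h
    · exfalso
      have := (Finset.mem_filter.mp ht).2
      rw [h] at this
      exact lt_irrefl _ this
    · rw [h]
  have h2 : ∀ t ∈ s.filter (fun t => ¬ 0 < v t i), (v t i : ℝ) = 0 := by
    intro t ht
    have h := (Finset.mem_filter.mp ht).2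
    have h0 : v t i = 0 := le_antisymm (not_lt.mp h) zero_le
    rw [h0]; simp
  rw [Finset.sum_congr rfl h1, Finset.sum_congr rfl h2, Finset.sum_const,
    Finset.sum_const_zero, add_zero, nsmul_eq_mul, mul_comm]

end Aux

/-- There is a deterministic online allocation algorithm such that, on every personalized
`2`-value stream, at every time step every type-2 agent (`α i = β i > 0`) gets at least half
its maximin share and every type-3 agent (`α i > β i = 0`) gets at least a third of it. -/
theorem statement4 (n : ℕ) (hn : 1 ≤ n) (α β : Fin n → NNReal) (hβα : ∀ i, β i ≤ α i) :
    ∃ F : List (Fin n → NNReal) → Fin n,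
      ∀ v : ℕ → Fin n → NNReal, (∀ (t : ℕ) (i : Fin n), v t i = α i ∨ v t i = β i) →
        ∀ (T : ℕ) (i : Fin n),
          (α i = β i → 0 < α i →
            mmsN n (Finset.range T) (fun t => (v t i : ℝ)) / 2 ≤
              bval n v i (bundle n F v i T)) ∧
          (β i = 0 → 0 < α i →
            mmsN n (Finset.range T) (fun t => (v t i : ℝ)) / 3 ≤
              bval n v i (bundle n F v i T)) := by
  have hn0 : 0 < n := hn
  refine ⟨myF n hn0, fun v hv T i => ?_⟩
  set m := ((Finset.range T).filter fun t => 0 < v t i).card with hm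
  set k := CC n hn0 v T i with hk
  have hmk : m / n ≤ k := by
    have h1 : m < n * (k + 1) := count_lt n hn0 v T i
    have h2 : m / n < k + 1 := (Nat.div_lt_iff_lt_mul hn0).mpr (by rw [Nat.mul_comm]; exact h1)
    omega
  have main : (∀ t, v t i = 0 ∨ v t i = α i) →
      0 ≤ mmsN n (Finset.range T) (fun t => (v t i : ℝ)) ∧
      mmsN n (Finset.range T) (fun t => (v t i : ℝ)) ≤
        bval n v i (bundle n (myF n hn0) v i T) := by
    intro H
    -- value of the bundle
    have hb : bval n v i (bundle n (myF n hn0) v i T) = (α i : ℝ) * k := by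
      rw [bval, bundle]
      have hfe : (Finset.range T).filter (fun t => alloc n (myF n hn0) v t = i) =
          (Finset.range T).filter (fun t => sig n hn0 v t = i) := by
        apply Finset.filter_congr
        intro t _
        rw [alloc_myF]
      rw [hfe, sum_two_val n v (α i) i H, Finset.filter_filter, hk, CC_card]
    -- upper bound for every partition value
    have hub : ∀ x ∈ { x : ℝ | ∃ P : ℕ → Fin n,
        x = ⨅ j : Fin n, ∑ t ∈ (Finset.range T).filter (fun t => P t = j), (v t i : ℝ) },
        x ≤ (α i : ℝ) * (m / n : ℕ) := by
      rintro x ⟨P, rfl⟩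
      have hsum : m = ∑ j : Fin n,
          (((Finset.range T).filter fun t => 0 < v t i).filter fun t => P t = j).card := by
        rw [hm]
        exact Finset.card_eq_sum_card_fiberwise (fun t _ => Finset.mem_univ (P t))
      have hex : ∃ j : Fin n,
          (((Finset.range T).filter fun t => 0 < v t i).filter fun t => P t = j).card ≤ m / n := by
        by_contra hcon
        push_neg at hcon
        have hle : ∀ j ∈ (Finset.univ : Finset (Fin n)), m / n + 1 ≤
            (((Finset.range T).filter fun t => 0 < v t i).filter fun t => P t = j).card :=
          fun j _ => hcon j
        have h3 := Finset.sum_le_sum hle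
        rw [← hsum, Finset.sum_const, Finset.card_univ, Fintype.card_fin, smul_eq_mul] at h3
        have h4 : m < (m / n + 1) * n := (Nat.div_lt_iff_lt_mul hn0).mp (Nat.lt_succ_self _)
        rw [mul_comm] at h4
        omega
      obtain ⟨j0, hj0⟩ := hex
      have hile : (⨅ j : Fin n, ∑ t ∈ (Finset.range T).filter (fun t => P t = j), (v t i : ℝ)) ≤
          ∑ t ∈ (Finset.range T).filter (fun t => P t = j0), (v t i : ℝ) :=
        ciInf_le (Set.finite_range _).bddBelow j0
      rw [sum_two_val n v (α i) i H] at hile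
      refine hile.trans ?_
      apply mul_le_mul_of_nonneg_left _ (α i).coe_nonneg
      have hcards : (((Finset.range T).filter fun t => P t = j0).filter fun t => 0 < v t i).card
          ≤ m / n := by
        rwa [Finset.filter_comm]
      exact_mod_cast hcards
    have hBdd : BddAbove { x : ℝ | ∃ P : ℕ → Fin n,
        x = ⨅ j : Fin n, ∑ t ∈ (Finset.range T).filter (fun t => P t = j), (v t i : ℝ) } :=
      ⟨(α i : ℝ) * (m / n : ℕ), fun x hx => hub x hx⟩
    constructor
    · have hx0 : (⨅ j : Fin n, ∑ t ∈ (Finset.range T).filter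
          (fun t => (fun _ => i) t = j), (v t i : ℝ)) ∈ { x : ℝ | ∃ P : ℕ → Fin n,
          x = ⨅ j : Fin n, ∑ t ∈ (Finset.range T).filter (fun t => P t = j), (v t i : ℝ) } :=
        ⟨fun _ => i, rfl⟩
      have h0 : (0 : ℝ) ≤ ⨅ j : Fin n, ∑ t ∈ (Finset.range T).filter
          (fun t => (fun _ => i) t = j), (v t i : ℝ) :=
        Real.iInf_nonneg fun j => Finset.sum_nonneg fun t _ => (v t i).coe_nonneg
      exact h0.trans (le_csSup hBdd hx0)
    · have h1 : mmsN n (Finset.range T) (fun t => (v t i : ℝ)) ≤ (α i : ℝ) * (m / n : ℕ) :=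
        Real.sSup_le hub (by positivity)
      refine h1.trans ?_
      rw [hb]
      apply mul_le_mul_of_nonneg_left _ (α i).coe_nonneg
      exact_mod_cast hmk
  constructor
  · intro h2 _
    have H : ∀ t, v t i = 0 ∨ v t i = α i := by
      intro t
      rcases hv t i with h | h
      · exact Or.inr h
      · exact Or.inr (by rw [h, ← h2])
    obtain ⟨h0, hle⟩ := main H
    linarith
  · intro h3 _
    have H : ∀ t, v t i = 0 ∨ v t i = α i := by
      intro t
      rcases hv t i with h | h
      · exact Or.inr h
      · exact Or.inl (by rw [h, h3])
    obtain ⟨h0, hle⟩ := main H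
    linarith

end
end

section
/- For every integer n ≥ 1 and all α, β : Fin n → ℝ≥0 with 0 < β i ≤ α i for every i, there exists a deterministic online allocation algorithm with foresight n−1 such that for every personalized 2-value stream v with parameters α, β and every positive integer λ, there exists T₀ ∈ ℕ such that for every time step T ≥ T₀ the induced allocation is (λ/(λ+2))-EF, (λ/(λ+1))-EF1, and (λ/(λ+2))-PROP. -/
open Finset

noncomputable section

lemma count_mod_formula {n : ℕ} (hn : 0 < n) {r : ℕ} (hr : r < n) (m : ℕ) :
    ((Finset.range m).filter (fun k => k % n = r)).card
      = m / n + if r < m % n then 1 else 0 := by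
  induction m with
  | zero => simp
  | succ m ih =>
      rw [Finset.range_add_one, Finset.filter_insert]
      have hm : m % n < n := Nat.mod_lt _ hn
      have h1 : m / n * n + m % n = m := Nat.div_add_mod' m n
      have hcase : (m % n + 1 < n ∧ (m+1) % n = m % n + 1 ∧ (m+1)/n = m/n)
          ∨ (m % n + 1 = n ∧ (m+1) % n = 0 ∧ (m+1)/n = m/n + 1) := by
        have hrew : m + 1 = (m % n + 1) + (m / n) * n := by omega
        rcases lt_or_eq_of_le (Nat.succ_le_of_lt hm) with h | h
        · left
          refine ⟨h, ?_, ?_⟩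
          · rw [hrew, Nat.add_mul_mod_self_right, Nat.mod_eq_of_lt h]
          · rw [hrew, Nat.add_mul_div_right _ _ hn, Nat.div_eq_of_lt h, Nat.zero_add]
        · right
          refine ⟨h, ?_, ?_⟩
          · rw [hrew, Nat.add_mul_mod_self_right, show m % n + 1 = n from h, Nat.mod_self]
          · rw [hrew, Nat.add_mul_div_right _ _ hn, show m % n + 1 = n from h,
              Nat.div_self hn, Nat.add_comm]
      by_cases hmr : m % n = r
      · rw [if_pos hmr, Finset.card_insert_of_notMem (by simp), ih]
        rcases hcase with ⟨h2, h3, h4⟩ | ⟨h2, h3, h4⟩ <;> split_ifs <;> omega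
      · rw [if_neg hmr, ih]
        rcases hcase with ⟨h2, h3, h4⟩ | ⟨h2, h3, h4⟩ <;> split_ifs <;> omega

lemma count_mod_le {n : ℕ} (hn : 0 < n) {i j : ℕ} (hi : i < n) (hj : j < n) (m : ℕ) :
    ((Finset.range m).filter (fun k => k % n = j)).card
      ≤ ((Finset.range m).filter (fun k => k % n = i)).card + 1 := by
  rw [count_mod_formula hn hi, count_mod_formula hn hj]
  split_ifs <;> omega

open Classical in
/-- number of previous goods with the same value vector as good `t` -/
def cnt {n : ℕ} (v : ℕ → Fin n → NNReal) (t : ℕ) : ℕ :=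
  ((Finset.range t).filter (fun s => v s = v t)).card

lemma cnt_congr {n : ℕ} {v v' : ℕ → Fin n → NNReal} {t : ℕ}
    (h : ∀ s ≤ t, v s = v' s) : cnt v t = cnt v' t := by
  classical
  unfold cnt
  have he : ((Finset.range t).filter (fun s => v s = v t))
      = ((Finset.range t).filter (fun s => v' s = v' t)) := by
    apply Finset.filter_congr
    intro s hs
    rw [h s (le_of_lt (Finset.mem_range.mp hs)), h t le_rfl]
  rw [he]

/-- within one value-vector class, the residues of `cnt` are distributed like `range m` -/
lemma fiber_card_s12 {n : ℕ} (v : ℕ → Fin n → NNReal) (w : Fin n → NNReal) (T : ℕ) (r : ℕ) :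
    letI S := (Finset.range T).filter (fun t => v t = w)
    ((S.filter (fun t => cnt v t % n = r)).card
      = ((Finset.range S.card).filter (fun k => k % n = r)).card) := by
  classical
  set S := (Finset.range T).filter (fun t => v t = w) with hS
  set m := S.card with hm
  have hcnt : ∀ t ∈ S, cnt v t = (S.filter (fun s => s < t)).card := by
    intro t ht
    rw [Finset.mem_filter, Finset.mem_range] at ht
    unfold cnt
    congr 1
    ext s
    simp only [Finset.mem_filter, Finset.mem_range, hS]
    constructor
    · rintro ⟨h1, h2⟩; exact ⟨⟨lt_trans h1 ht.1, by rw [h2, ht.2]⟩, h1⟩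
    · rintro ⟨⟨h1, h2⟩, h3⟩; exact ⟨h3, by rw [h2, ht.2]⟩
  have hmono : ∀ s ∈ S, ∀ t ∈ S, s < t → cnt v s < cnt v t := by
    intro s hs t ht hst
    rw [hcnt s hs, hcnt t ht]
    apply Finset.card_lt_card
    constructor
    · intro x hx
      rw [Finset.mem_filter] at hx ⊢
      exact ⟨hx.1, lt_trans hx.2 hst⟩
    · intro hsub
      have := hsub (Finset.mem_filter.mpr ⟨hs, hst⟩)
      simp at this
  have hlt : ∀ t ∈ S, cnt v t < m := by
    intro t ht
    rw [hcnt t ht]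
    apply Finset.card_lt_card
    constructor
    · exact Finset.filter_subset _ _
    · intro hsub
      have h2 := hsub ht
      rw [Finset.mem_filter] at h2
      exact lt_irrefl t h2.2
  have hinj : Set.InjOn (cnt v) ↑S := by
    intro s hs t ht hst
    by_contra hne
    rcases lt_or_gt_of_ne hne with h | h
    · exact absurd hst (ne_of_lt (hmono s hs t ht h))
    · exact absurd hst.symm (ne_of_lt (hmono t ht s hs h))
  have himage : S.image (cnt v) = Finset.range m := by
    apply Finset.eq_of_subset_of_card_le
    · intro x hx
      rw [Finset.mem_image] at hx
      obtain ⟨t, ht, rfl⟩ := hx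
      exact Finset.mem_range.mpr (hlt t ht)
    · rw [Finset.card_range, Finset.card_image_of_injOn hinj]
  calc (S.filter (fun t => cnt v t % n = r)).card
      = ((S.filter (fun t => cnt v t % n = r)).image (cnt v)).card :=
        (Finset.card_image_of_injOn
          (hinj.mono (Finset.coe_subset.mpr (Finset.filter_subset _ _)))).symm
    _ = ((S.image (cnt v)).filter (fun k => k % n = r)).card := by
        rw [Finset.filter_image]
    _ = _ := by rw [himage]

/-- The agent to whom good `t` is assigned by the deterministic online algorithm `F` with
foresight `ℓ` on stream `v`: `σ(t) = F [v 0, …, v (t+ℓ)]`. -/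
def allocF (n ℓ : ℕ) (F : List (Fin n → NNReal) → Fin n) (v : ℕ → Fin n → NNReal)
    (t : ℕ) : Fin n :=
  F ((List.range (t + ℓ + 1)).map v)

/-- The bundle of agent `i` at the end of time step `T`. -/
def bundleF (n ℓ : ℕ) (F : List (Fin n → NNReal) → Fin n) (v : ℕ → Fin n → NNReal)
    (i : Fin n) (T : ℕ) : Finset ℕ :=
  (Finset.range T).filter fun t => allocF n ℓ F v t = i

/-- For `n` agents with `0 < β i ≤ α i`, there is a deterministic online allocation algorithm
with foresight `n−1` such that, on every personalized `2`-value stream and for every positive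
integer `λ`, after some time `T₀` the allocation is `(λ/(λ+2))`-EF, `(λ/(λ+1))`-EF1 and
`(λ/(λ+2))`-PROP at the end of every time step `T ≥ T₀`. -/
theorem statement12 (n : ℕ) (hn : 1 ≤ n) (α β : Fin n → NNReal)
    (hβ : ∀ i, 0 < β i) (hβα : ∀ i, β i ≤ α i) :
    ∃ F : List (Fin n → NNReal) → Fin n,
      ∀ v : ℕ → Fin n → NNReal, (∀ (t : ℕ) (i : Fin n), v t i = α i ∨ v t i = β i) →
        ∀ lam : ℕ, 0 < lam →
          ∃ T₀ : ℕ, ∀ T : ℕ, T₀ ≤ T →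
            (∀ i j : Fin n,
              ((lam : ℝ) / ((lam : ℝ) + 2)) * bval n v i (bundleF n (n - 1) F v j T) ≤
                bval n v i (bundleF n (n - 1) F v i T)) ∧
            (∀ i j : Fin n, ∃ X ⊆ bundleF n (n - 1) F v j T, X.card ≤ 1 ∧
              ((lam : ℝ) / ((lam : ℝ) + 1)) * bval n v i (bundleF n (n - 1) F v j T \ X) ≤
                bval n v i (bundleF n (n - 1) F v i T)) ∧
            (∀ i : Fin n,
              ((lam : ℝ) / ((lam : ℝ) + 2)) / (n : ℝ) * (∑ t ∈ Finset.range T, (v t i : ℝ)) ≤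
                bval n v i (bundleF n (n - 1) F v i T)) := by
  classical
  set F : List (Fin n → NNReal) → Fin n :=
    fun L => ⟨cnt (fun s => L.getD s 0) (L.length - n) % n, Nat.mod_lt _ hn⟩ with hF
  refine ⟨F, ?_⟩
  intro v hv lam hlam
  have halloc : ∀ t, allocF n (n - 1) F v t = ⟨cnt v t % n, Nat.mod_lt _ hn⟩ := by
    intro t
    unfold allocF
    apply Fin.ext
    show cnt (fun s => (((List.range (t + (n-1) + 1)).map v)).getD s 0)
        ((((List.range (t + (n-1) + 1)).map v)).length - n) % n = cnt v t % n
    have hlen : ((List.range (t + (n-1) + 1)).map v).length = t + n := by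
      rw [List.length_map, List.length_range]; omega
    rw [hlen]
    have ht : t + n - n = t := by omega
    rw [ht]
    congr 1
    apply cnt_congr
    intro s hs
    have hs' : s < t + (n-1) + 1 := by omega
    simp [List.getD_eq_getElem?_getD, List.getElem?_map, List.getElem?_range, hs']
  set σ : ℕ → Fin n := fun t => allocF n (n - 1) F v t with hσdef
  have hσ : ∀ t, (σ t : ℕ) = cnt v t % n := fun t => by
    rw [show σ t = allocF n (n - 1) F v t from rfl, halloc t]
  set 𝒯 : Finset (Fin n → NNReal) :=
    Finset.image (fun s : Fin n → Bool => fun i => if s i then α i else β i) Finset.univ with h𝒯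
  have hmem : ∀ t, v t ∈ 𝒯 := by
    intro t
    rw [h𝒯, Finset.mem_image]
    refine ⟨fun i => if v t i = α i then true else false, Finset.mem_univ _, ?_⟩
    funext i
    by_cases h : v t i = α i
    · simp [h]
    · have h' : v t i = β i := (hv t i).resolve_left h
      simp [h, h']
      exact fun hh => hh.symm
  set C : Fin n → ℝ := fun i => ∑ w ∈ 𝒯, (w i : ℝ) with hCdef
  have hC0 : ∀ i, 0 ≤ C i := fun i => Finset.sum_nonneg fun w _ => NNReal.coe_nonneg _
  have hbundle : ∀ (j : Fin n) (T : ℕ),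
      bundleF n (n - 1) F v j T = (Finset.range T).filter (fun t => σ t = j) :=
    fun j T => rfl
  have hB0 : ∀ (i j : Fin n) (T : ℕ), 0 ≤ bval n v i (bundleF n (n - 1) F v j T) :=
    fun i j T => Finset.sum_nonneg fun t _ => NNReal.coe_nonneg _
  have hdecomp : ∀ (i j : Fin n) (T : ℕ),
      bval n v i (bundleF n (n - 1) F v j T)
        = ∑ w ∈ 𝒯,
            (((Finset.range T).filter (fun t => v t = w ∧ σ t = j)).card : ℝ) * (w i : ℝ) := by
    intro i j T
    unfold bval
    rw [← Finset.sum_fiberwise_of_maps_to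
        (fun t (_ : t ∈ bundleF n (n-1) F v j T) => hmem t) (fun t => (v t i : ℝ))]
    apply Finset.sum_congr rfl
    intro w _
    have hfe : (bundleF n (n - 1) F v j T).filter (fun t => v t = w)
        = (Finset.range T).filter (fun t => v t = w ∧ σ t = j) := by
      rw [hbundle, Finset.filter_filter]
      apply Finset.filter_congr
      intro t _
      tauto
    rw [hfe]
    rw [Finset.sum_congr rfl (fun t ht => by
      rw [(Finset.mem_filter.mp ht).2.1]), Finset.sum_const, nsmul_eq_mul]
  have hkey : ∀ (i j : Fin n) (w : Fin n → NNReal) (T : ℕ),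
      ((Finset.range T).filter (fun t => v t = w ∧ σ t = j)).card
        ≤ ((Finset.range T).filter (fun t => v t = w ∧ σ t = i)).card + 1 := by
    intro i j w T
    have e : ∀ r : Fin n, (Finset.range T).filter (fun t => v t = w ∧ σ t = r)
        = ((Finset.range T).filter (fun t => v t = w)).filter
            (fun t => cnt v t % n = (r : ℕ)) := by
      intro r
      rw [Finset.filter_filter]
      apply Finset.filter_congr
      intro t _
      constructor
      · rintro ⟨h1, h2⟩; exact ⟨h1, by rw [← hσ t, h2]⟩
      · rintro ⟨h1, h2⟩; exact ⟨h1, Fin.ext (by rw [hσ t, h2])⟩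
    rw [e j, e i, fiber_card_s12 v w T, fiber_card_s12 v w T]
    exact count_mod_le hn i.isLt j.isLt _
  have hle : ∀ (i j : Fin n) (T : ℕ),
      bval n v i (bundleF n (n - 1) F v j T)
        ≤ bval n v i (bundleF n (n - 1) F v i T) + C i := by
    intro i j T
    rw [hdecomp i j T, hdecomp i i T, hCdef]
    calc ∑ w ∈ 𝒯, (((Finset.range T).filter (fun t => v t = w ∧ σ t = j)).card : ℝ) * (w i : ℝ)
        ≤ ∑ w ∈ 𝒯,
            ((((Finset.range T).filter (fun t => v t = w ∧ σ t = i)).card : ℝ) + 1) * (w i : ℝ) := by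
          apply Finset.sum_le_sum
          intro w _
          apply mul_le_mul_of_nonneg_right _ (NNReal.coe_nonneg _)
          exact_mod_cast hkey i j w T
      _ = _ := by
          simp only [add_mul, one_mul]
          rw [Finset.sum_add_distrib]
  have htot : ∀ (i : Fin n) (T : ℕ),
      ∑ t ∈ Finset.range T, (v t i : ℝ)
        = ∑ j : Fin n, bval n v i (bundleF n (n - 1) F v j T) := by
    intro i T
    rw [← Finset.sum_fiberwise_of_maps_to
        (fun t (_ : t ∈ Finset.range T) => Finset.mem_univ (σ t)) (fun t => (v t i : ℝ))]
    apply Finset.sum_congr rfl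
    intro j _
    rw [hbundle]
    rfl
  have hnR : (0 : ℝ) < n := by exact_mod_cast hn
  have hlamR : (0 : ℝ) ≤ lam := Nat.cast_nonneg _
  haveI : Nonempty (Fin n) := ⟨⟨0, hn⟩⟩
  obtain ⟨N, hN⟩ := exists_nat_ge
    (Finset.univ.sup' (Finset.univ_nonempty (α := Fin n))
      (fun i : Fin n => (n : ℝ) * ((lam : ℝ) + 1) * C i / (β i : ℝ)))
  refine ⟨N, fun T hT => ?_⟩
  have hBmain : ∀ i : Fin n, (lam : ℝ) * C i ≤ bval n v i (bundleF n (n - 1) F v i T) := by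
    intro i
    have hβi : (0 : ℝ) < (β i : ℝ) := by exact_mod_cast hβ i
    have h3 : (n : ℝ) * ((lam : ℝ) + 1) * C i ≤ (N : ℝ) * (β i : ℝ) := by
      have h4 := Finset.le_sup' (fun i : Fin n => (n : ℝ) * ((lam : ℝ) + 1) * C i / (β i : ℝ))
        (Finset.mem_univ i)
      have h5 : (n : ℝ) * ((lam : ℝ) + 1) * C i / (β i : ℝ) ≤ N := le_trans h4 hN
      rw [div_le_iff₀ hβi] at h5
      linarith
    have h1 : (N : ℝ) * (β i : ℝ) ≤ ∑ t ∈ Finset.range T, (v t i : ℝ) := by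
      calc (N : ℝ) * (β i : ℝ) ≤ (T : ℝ) * (β i : ℝ) := by
            apply mul_le_mul_of_nonneg_right _ hβi.le
            exact_mod_cast hT
        _ = ∑ _t ∈ Finset.range T, (β i : ℝ) := by
            rw [Finset.sum_const, Finset.card_range, nsmul_eq_mul]
        _ ≤ _ := by
            apply Finset.sum_le_sum
            intro t _
            rcases hv t i with h | h
            · rw [h]; exact_mod_cast hβα i
            · rw [h]
    have h2 : ∑ t ∈ Finset.range T, (v t i : ℝ)
        ≤ (n : ℝ) * (bval n v i (bundleF n (n - 1) F v i T) + C i) := by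
      rw [htot i T]
      calc ∑ j : Fin n, bval n v i (bundleF n (n - 1) F v j T)
          ≤ ∑ _j : Fin n, (bval n v i (bundleF n (n - 1) F v i T) + C i) :=
            Finset.sum_le_sum fun j _ => hle i j T
        _ = _ := by
            rw [Finset.sum_const, Finset.card_univ, Fintype.card_fin, nsmul_eq_mul]
    nlinarith [hC0 i]
  have hEFcore : ∀ i : Fin n, ∀ D : ℝ,
      D ≤ bval n v i (bundleF n (n - 1) F v i T) + C i →
      ((lam : ℝ) / ((lam : ℝ) + 2)) * D ≤ bval n v i (bundleF n (n - 1) F v i T) := by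
    intro i D hD
    have hl2 : (0 : ℝ) < (lam : ℝ) + 2 := by linarith
    rw [div_mul_eq_mul_div, div_le_iff₀ hl2]
    nlinarith [hBmain i, hB0 i i T, mul_le_mul_of_nonneg_left hD hlamR]
  refine ⟨fun i j => hEFcore i _ (hle i j T), ?_, ?_⟩
  · intro i j
    refine ⟨∅, Finset.empty_subset _, by simp, ?_⟩
    rw [Finset.sdiff_empty]
    have hl1 : (0 : ℝ) < (lam : ℝ) + 1 := by linarith
    rw [div_mul_eq_mul_div, div_le_iff₀ hl1]
    nlinarith [hBmain i, hB0 i i T, mul_le_mul_of_nonneg_left (hle i j T) hlamR]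
  · intro i
    have h2 : ∑ t ∈ Finset.range T, (v t i : ℝ)
        ≤ (n : ℝ) * (bval n v i (bundleF n (n - 1) F v i T) + C i) := by
      rw [htot i T]
      calc ∑ j : Fin n, bval n v i (bundleF n (n - 1) F v j T)
          ≤ ∑ _j : Fin n, (bval n v i (bundleF n (n - 1) F v i T) + C i) :=
            Finset.sum_le_sum fun j _ => hle i j T
        _ = _ := by
            rw [Finset.sum_const, Finset.card_univ, Fintype.card_fin, nsmul_eq_mul]
    have hste : ((lam : ℝ) / ((lam : ℝ) + 2)) / (n : ℝ) * (∑ t ∈ Finset.range T, (v t i : ℝ))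
        ≤ ((lam : ℝ) / ((lam : ℝ) + 2)) / (n : ℝ)
          * ((n : ℝ) * (bval n v i (bundleF n (n - 1) F v i T) + C i)) := by
      apply mul_le_mul_of_nonneg_left h2
      positivity
    refine le_trans hste ?_
    have heq : ((lam : ℝ) / ((lam : ℝ) + 2)) / (n : ℝ)
          * ((n : ℝ) * (bval n v i (bundleF n (n - 1) F v i T) + C i))
        = ((lam : ℝ) / ((lam : ℝ) + 2))
          * (bval n v i (bundleF n (n - 1) F v i T) + C i) := by
      field_simp
    rw [heq]
    exact hEFcore i _ le_rfl


end
end
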